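/- arXiv:1508.06443 — 2 statements merged into one kernel-verified Lean document; each statement's English description precedes it below -/
import Mathlib

section
/- Let C_1 and C_2 be cycles in the full grid graph G that have more than one vertex in common, and let C_3 be the unique cycle consisting only of edges of C_1 and C_2 whose interior contains the interiors of both C_1 and C_2 and such that every edge of C_1 or C_2 belongs to C_3 or lies in its interior. If C_2 contains at least one edge lying in the exterior of C_1, then C_3 contains an edge of C_2 that lies in the exterior of C_1. -/
/-!
Common framework: tile ℝ² into closed unit squares indexed by `ℤ²`, with corners
forming a translate of `ℤ²` and the origin the centre of the square `S₀` (index `(0,0)`).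
A cycle is identified with its edge set (a set of unordered pairs of corners);
its interior (resp. exterior) is the union of the bounded (resp. unbounded)
connected components of the complement of the closed curve it traces in the plane.
-/

/-- Corners of the grid squares, indexed by `ℤ²`. -/
abbrev GridV := ℤ × ℤ

/-- Embedding of corners into the plane: the square of index `z` is
`[z₁ - 1/2, z₁ + 1/2] × [z₂ - 1/2, z₂ + 1/2]`, so the origin is the centre of `S₀`. -/
noncomputable def toPlane (v : GridV) : ℝ × ℝ := ((v.1 : ℝ) - 1 / 2, (v.2 : ℝ) - 1 / 2)

/-- The closed unit square of index `z`. -/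
def squareSet (z : GridV) : Set (ℝ × ℝ) :=
  Set.Icc ((z.1 : ℝ) - 1 / 2, (z.2 : ℝ) - 1 / 2) ((z.1 : ℝ) + 1 / 2, (z.2 : ℝ) + 1 / 2)

/-- The four edges (unit segments) of the square of index `z`, as unordered pairs of corners. -/
def squareEdges (z : GridV) : Set (Sym2 GridV) :=
  {s(z, z + (1, 0)), s(z + (1, 0), z + (1, 1)), s(z + (1, 1), z + (0, 1)), s(z + (0, 1), z)}

/-- Adjacency of corners in the full grid graph `G`: Euclidean distance one. -/
def GridAdj (u v : GridV) : Prop := |u.1 - v.1| + |u.2 - v.2| = 1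

/-- A cycle in the full grid graph: a cyclic sequence `(v₀, …, v_{n-1}, v₀)` of
distinct corners with consecutive corners adjacent. -/
structure GridCycle where
  n : ℕ
  hn : 3 ≤ n
  f : ZMod n → GridV
  inj : Function.Injective f
  adj : ∀ i, GridAdj (f i) (f (i + 1))

/-- The edge set of a grid cycle. -/
def GridCycle.edgeSet (C : GridCycle) : Set (Sym2 GridV) :=
  {e | ∃ i : ZMod C.n, e = s(C.f i, C.f (i + 1))}

/-- An edge set is (the edge set of) a cycle of the grid graph `G`.
We identify a cycle with its edge set. -/
def IsCycle (E : Set (Sym2 GridV)) : Prop := ∃ C : GridCycle, C.edgeSet = E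

/-- A cycle of the subgraph of the grid graph with edge set `G`. -/
def IsCycleIn (G E : Set (Sym2 GridV)) : Prop := IsCycle E ∧ E ⊆ G

/-- The vertices incident to some edge of `E`. -/
def vertexSetOf (E : Set (Sym2 GridV)) : Set GridV := {v | ∃ e ∈ E, v ∈ e}

/-- The closed segment in the plane realizing an edge. -/
noncomputable def edgeSeg : Sym2 GridV → Set (ℝ × ℝ) :=
  Sym2.lift ⟨fun a b => segment ℝ (toPlane a) (toPlane b), fun _ _ => segment_symm ℝ _ _⟩

/-- The closed curve in the plane traced by the edges of `E`. -/
noncomputable def carrierOf (E : Set (Sym2 GridV)) : Set (ℝ × ℝ) := ⋃ e ∈ E, edgeSeg e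

/-- The interior of a cycle: the union of the bounded connected components of the
complement of its carrier curve. -/
noncomputable def interiorOf (E : Set (Sym2 GridV)) : Set (ℝ × ℝ) :=
  {p | p ∉ carrierOf E ∧ Bornology.IsBounded (connectedComponentIn (carrierOf E)ᶜ p)}

/-- The exterior of a cycle: the union of the unbounded connected components of the
complement of its carrier curve. -/
noncomputable def exteriorOf (E : Set (Sym2 GridV)) : Set (ℝ × ℝ) :=
  {p | p ∉ carrierOf E ∧ ¬ Bornology.IsBounded (connectedComponentIn (carrierOf E)ᶜ p)}

/-- The set `A` is contained in the interior of the cycle `E` (points of the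
curve itself being allowed, so that e.g. a square whose boundary edges lie on the
cycle counts as contained in the interior). -/
def inInterior (E : Set (Sym2 GridV)) (A : Set (ℝ × ℝ)) : Prop :=
  A ⊆ interiorOf E ∪ carrierOf E

/-- The set `A` lies in the exterior of the cycle `E` (points of the curve itself
being allowed). -/
def inExterior (E : Set (Sym2 GridV)) (A : Set (ℝ × ℝ)) : Prop :=
  A ⊆ exteriorOf E ∪ carrierOf E

/-- Star adjacency: distinct squares sharing at least a corner. -/
def starAdj (z w : GridV) : Prop := z ≠ w ∧ |z.1 - w.1| ≤ 1 ∧ |z.2 - w.2| ≤ 1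

/-- Plus adjacency: squares sharing an edge. -/
def plusAdj (z w : GridV) : Prop := |z.1 - w.1| + |z.2 - w.2| = 1

/-- The star-connected occupied component `C(0)` of the square `S₀` (of index `(0,0)`),
for the occupancy configuration `ω`; empty if `S₀` is vacant. -/
def starComp (ω : GridV → Prop) : Set GridV :=
  {z | ω z ∧ Relation.ReflTransGen (fun a b => ω a ∧ ω b ∧ starAdj a b) (0, 0) z}

/-- The plus-connected occupied component `C⁺(0)` of the square `S₀`. -/
def plusComp (ω : GridV → Prop) : Set GridV :=
  {z | ω z ∧ Relation.ReflTransGen (fun a b => ω a ∧ ω b ∧ plusAdj a b) (0, 0) z}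

/-- The edge set of the graph `G_C`: all edges of squares of `C(0)`. -/
def gcEdges (ω : GridV → Prop) : Set (Sym2 GridV) := ⋃ z ∈ starComp ω, squareEdges z

/-- The edge set of the graph `G⁺_C`: all edges of squares of `C⁺(0)`. -/
def gpcEdges (ω : GridV → Prop) : Set (Sym2 GridV) := ⋃ z ∈ plusComp ω, squareEdges z

/-- `e` is an outermost boundary edge of the graph with edge set `G`: for every
cycle `E` in this graph, either `e` is an edge of `E` or `e` lies in the exterior of `E`. -/
def outermostBoundaryEdgeIn (G : Set (Sym2 GridV)) (e : Sym2 GridV) : Prop :=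
  e ∈ G ∧ ∀ E, IsCycleIn G E → e ∈ E ∨ inExterior E (edgeSeg e)

/-- The subgraph spanned by the edge set `E` is connected: any two incident vertices
are joined by a walk using only edges of `E`. -/
def EdgeSetConnected (E : Set (Sym2 GridV)) : Prop :=
  ∀ u v, u ∈ vertexSetOf E → v ∈ vertexSetOf E →
    ∃ p : List GridV, p.head? = some u ∧ p.getLast? = some v ∧
      List.Chain' (fun a b => s(a, b) ∈ E) p

/-- `D` is the outermost boundary cycle `D_k` of the square of index `z` of the star
component `C(0)`: (a) the square lies in the interior of `D`; (b) every edge of `D` is a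
boundary edge adjacent to an occupied square of `C(0)` in the interior of `D` and to a
vacant square in the exterior of `D`; (c) every cycle of `G_C` containing the square in
its interior has all its edges on `D` or in the interior of `D`. -/
def isOutermostCycleOf (ω : GridV → Prop) (z : GridV) (D : Set (Sym2 GridV)) : Prop :=
  IsCycleIn (gcEdges ω) D ∧
  inInterior D (squareSet z) ∧
  (∀ e ∈ D,
    (∃ w ∈ starComp ω, e ∈ squareEdges w ∧ inInterior D (squareSet w)) ∧
    (∃ w, ¬ ω w ∧ e ∈ squareEdges w ∧ inExterior D (squareSet w))) ∧
  (∀ C, IsCycleIn (gcEdges ω) C → inInterior C (squareSet z) →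
    ∀ e ∈ C, e ∈ D ∨ inInterior D (edgeSeg e))

/-- The list of edges traversed by a walk given as a list of vertices. -/
def walkEdges (p : List GridV) : List (Sym2 GridV) :=
  List.zipWith (fun a b => s(a, b)) p p.tail


section Stmt4Aux

lemma stmt4_toPlane_inj : Function.Injective toPlane := by
  intro a b h
  simp only [toPlane, Prod.mk.injEq] at h
  have h1 : (a.1 : ℝ) = b.1 := by linarith [h.1]
  have h2 : (a.2 : ℝ) = b.2 := by linarith [h.2]
  exact Prod.ext (by exact_mod_cast h1) (by exact_mod_cast h2)

lemma stmt4_gridAdj_ne {a b : GridV} (h : GridAdj a b) : a ≠ b := by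
  rintro rfl; simp [GridAdj] at h

lemma stmt4_gridAdj_cases {a b : GridV} (h : GridAdj a b) :
    b = (a.1 + 1, a.2) ∨ b = (a.1 - 1, a.2) ∨ b = (a.1, a.2 + 1) ∨ b = (a.1, a.2 - 1) := by
  unfold GridAdj at h
  rw [Int.abs_eq_natAbs, Int.abs_eq_natAbs] at h
  simp only [Prod.ext_iff]
  omega

lemma stmt4_edgeSeg_mk (a b : GridV) :
    edgeSeg s(a, b) = segment ℝ (toPlane a) (toPlane b) := rfl

lemma stmt4_seg_param {A B p : ℝ × ℝ} :
    p ∈ segment ℝ A B ↔ ∃ t : ℝ, 0 ≤ t ∧ t ≤ 1 ∧ p = A + t • (B - A) := by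
  rw [segment_eq_image', Set.mem_image]
  constructor
  · rintro ⟨t, ht, rfl⟩; exact ⟨t, ht.1, ht.2, rfl⟩
  · rintro ⟨t, h0, h1, rfl⟩; exact ⟨t, ⟨h0, h1⟩, rfl⟩

lemma stmt4_seg_param_inj {A B : ℝ × ℝ} (h : A ≠ B) {t s : ℝ}
    (he : A + t • (B - A) = A + s • (B - A)) : t = s := by
  have h1 : t • (B - A) = s • (B - A) := add_left_cancel he
  have h2 : (t - s) • (B - A) = 0 := by rw [sub_smul, h1, sub_self]
  rcases smul_eq_zero.mp h2 with h3 | h3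
  · exact sub_eq_zero.mp h3
  · exact absurd (sub_eq_zero.mp h3).symm h

lemma stmt4_seg_inter_canon {a b c d : GridV}
    (hb : b = (a.1 + 1, a.2) ∨ b = (a.1, a.2 + 1))
    (hd : d = (c.1 + 1, c.2) ∨ d = (c.1, c.2 + 1))
    (hne : s(a, b) ≠ s(c, d)) {p : ℝ × ℝ}
    (hp : p ∈ segment ℝ (toPlane a) (toPlane b))
    (hq : p ∈ segment ℝ (toPlane c) (toPlane d)) :
    p = toPlane a ∨ p = toPlane b := by
  obtain ⟨t, ht0, ht1, rfl⟩ := stmt4_seg_param.mp hp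
  obtain ⟨s, hs0, hs1, hpq⟩ := stmt4_seg_param.mp hq
  have e1 := congrArg Prod.fst hpq
  have e2 := congrArg Prod.snd hpq
  simp only [toPlane, Prod.fst_add, Prod.snd_add, Prod.smul_fst, Prod.smul_snd,
    Prod.fst_sub, Prod.snd_sub, smul_eq_mul] at e1 e2
  rcases hb with hb | hb <;> rcases hd with hd | hd <;> subst hb <;> subst hd <;>
      push_cast at e1 e2 <;> ring_nf at e1 e2
  · -- HH
    have ha2 : a.2 = c.2 := by exact_mod_cast (by linarith : (a.2:ℝ) = c.2)
    have hts : t - s = ((c.1 - a.1 : ℤ) : ℝ) := by push_cast; linarith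
    have hk : c.1 - a.1 = -1 ∨ c.1 - a.1 = 0 ∨ c.1 - a.1 = 1 := by
      have h5' : (-1:ℤ) ≤ c.1 - a.1 := by exact_mod_cast (by rw [← hts]; linarith : (-1:ℝ) ≤ ((c.1 - a.1:ℤ):ℝ))
      have h6' : c.1 - a.1 ≤ (1:ℤ) := by exact_mod_cast (by rw [← hts]; linarith : ((c.1 - a.1:ℤ):ℝ) ≤ 1)
      omega
    rcases hk with hk | hk | hk
    · left; rw [show t = 0 by rw [hk] at hts; push_cast at hts; linarith, zero_smul, add_zero]
    · exfalso
      have hca : c = a := Prod.ext (by omega) ha2.symm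
      exact hne (by rw [hca])
    · right; rw [show t = 1 by rw [hk] at hts; push_cast at hts; linarith, one_smul]; abel
  · -- HV
    have hts : t = ((c.1 - a.1 : ℤ) : ℝ) := by push_cast; linarith
    have hk : c.1 - a.1 = 0 ∨ c.1 - a.1 = 1 := by
      have h5' : (0:ℤ) ≤ c.1 - a.1 := by exact_mod_cast (by rw [← hts]; linarith : (0:ℝ) ≤ ((c.1 - a.1:ℤ):ℝ))
      have h6' : c.1 - a.1 ≤ (1:ℤ) := by exact_mod_cast (by rw [← hts]; linarith : ((c.1 - a.1:ℤ):ℝ) ≤ 1)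
      omega
    rcases hk with hk | hk
    · left; rw [show t = 0 by rw [hk] at hts; push_cast at hts; linarith, zero_smul, add_zero]
    · right; rw [show t = 1 by rw [hk] at hts; push_cast at hts; linarith, one_smul]; abel
  · -- VH
    have hts : t = ((c.2 - a.2 : ℤ) : ℝ) := by push_cast; linarith
    have hk : c.2 - a.2 = 0 ∨ c.2 - a.2 = 1 := by
      have h5' : (0:ℤ) ≤ c.2 - a.2 := by exact_mod_cast (by rw [← hts]; linarith : (0:ℝ) ≤ ((c.2 - a.2:ℤ):ℝ))
      have h6' : c.2 - a.2 ≤ (1:ℤ) := by exact_mod_cast (by rw [← hts]; linarith : ((c.2 - a.2:ℤ):ℝ) ≤ 1)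
      omega
    rcases hk with hk | hk
    · left; rw [show t = 0 by rw [hk] at hts; push_cast at hts; linarith, zero_smul, add_zero]
    · right; rw [show t = 1 by rw [hk] at hts; push_cast at hts; linarith, one_smul]; abel
  · -- VV
    have ha1 : a.1 = c.1 := by exact_mod_cast (by linarith : (a.1:ℝ) = c.1)
    have hts : t - s = ((c.2 - a.2 : ℤ) : ℝ) := by push_cast; linarith
    have hk : c.2 - a.2 = -1 ∨ c.2 - a.2 = 0 ∨ c.2 - a.2 = 1 := by
      have h5' : (-1:ℤ) ≤ c.2 - a.2 := by exact_mod_cast (by rw [← hts]; linarith : (-1:ℝ) ≤ ((c.2 - a.2:ℤ):ℝ))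
      have h6' : c.2 - a.2 ≤ (1:ℤ) := by exact_mod_cast (by rw [← hts]; linarith : ((c.2 - a.2:ℤ):ℝ) ≤ 1)
      omega
    rcases hk with hk | hk | hk
    · left; rw [show t = 0 by rw [hk] at hts; push_cast at hts; linarith, zero_smul, add_zero]
    · exfalso
      have hca : c = a := Prod.ext ha1.symm (by omega)
      exact hne (by rw [hca])
    · right; rw [show t = 1 by rw [hk] at hts; push_cast at hts; linarith, one_smul]; abel

lemma stmt4_canon {a b : GridV} (h : GridAdj a b) :
    ∃ u v : GridV, s(u, v) = s(a, b) ∧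
      segment ℝ (toPlane u) (toPlane v) = segment ℝ (toPlane a) (toPlane b) ∧
      ((u = a ∧ v = b) ∨ (u = b ∧ v = a)) ∧
      (v = (u.1 + 1, u.2) ∨ v = (u.1, u.2 + 1)) := by
  rcases stmt4_gridAdj_cases h with hb | hb | hb | hb
  · exact ⟨a, b, rfl, rfl, Or.inl ⟨rfl, rfl⟩, Or.inl hb⟩
  · refine ⟨b, a, Sym2.eq_swap, segment_symm ℝ _ _, Or.inr ⟨rfl, rfl⟩, Or.inl ?_⟩
    rw [hb]; simp [Prod.ext_iff]
  · exact ⟨a, b, rfl, rfl, Or.inl ⟨rfl, rfl⟩, Or.inr hb⟩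
  · refine ⟨b, a, Sym2.eq_swap, segment_symm ℝ _ _, Or.inr ⟨rfl, rfl⟩, Or.inr ?_⟩
    rw [hb]; simp [Prod.ext_iff]

lemma stmt4_seg_inter_main {a b c d : GridV} (hab : GridAdj a b) (hcd : GridAdj c d)
    (hne : s(a, b) ≠ s(c, d)) {p : ℝ × ℝ}
    (hp : p ∈ segment ℝ (toPlane a) (toPlane b))
    (hq : p ∈ segment ℝ (toPlane c) (toPlane d)) :
    p = toPlane a ∨ p = toPlane b := by
  obtain ⟨u, v, hs1, hseg1, hset1, hcan1⟩ := stmt4_canon hab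
  obtain ⟨w, x, hs2, hseg2, _, hcan2⟩ := stmt4_canon hcd
  have key := stmt4_seg_inter_canon hcan1 hcan2 (by rw [hs1, hs2]; exact hne)
    (by rw [hseg1]; exact hp) (by rw [hseg2]; exact hq)
  rcases hset1 with ⟨rfl, rfl⟩ | ⟨rfl, rfl⟩
  · exact key
  · exact key.symm

lemma stmt4_isCycle_edge {C : Set (Sym2 GridV)} (h : IsCycle C) {e : Sym2 GridV}
    (he : e ∈ C) : ∃ u v, e = s(u, v) ∧ GridAdj u v := by
  obtain ⟨G, rfl⟩ := h
  obtain ⟨i, rfl⟩ := he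
  exact ⟨_, _, rfl, G.adj i⟩

lemma stmt4_mem_carrierOf {E : Set (Sym2 GridV)} {q : ℝ × ℝ} :
    q ∈ carrierOf E ↔ ∃ e ∈ E, q ∈ edgeSeg e := by
  simp [carrierOf]

/-- If a grid edge is not on the cycle `C` and one of its points lies in the exterior
of `C`, then the whole edge lies in the exterior (allowing carrier points). -/
lemma stmt4_edge_exterior {C : Set (Sym2 GridV)} (hC : IsCycle C) {u v : GridV}
    (huv : GridAdj u v) (hnot : s(u, v) ∉ C) {q : ℝ × ℝ}
    (hq : q ∈ edgeSeg s(u, v)) (hqe : q ∈ exteriorOf C) :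
    inExterior C (edgeSeg s(u, v)) := by
  have hABne : toPlane u ≠ toPlane v := fun h => stmt4_gridAdj_ne huv (stmt4_toPlane_inj h)
  rw [stmt4_edgeSeg_mk] at hq
  obtain ⟨t2, ht20, ht21, hq'⟩ := stmt4_seg_param.mp hq
  intro x hx
  by_cases hx1 : x ∈ carrierOf C
  · exact Or.inr hx1
  rw [stmt4_edgeSeg_mk] at hx
  obtain ⟨t1, ht10, ht11, hx'⟩ := stmt4_seg_param.mp hx
  have hqnc : q ∉ carrierOf C := hqe.1
  -- the segment from x to q avoids the carrier of C
  have key : segment ℝ x q ⊆ (carrierOf C)ᶜ := by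
    intro y hy hyc
    obtain ⟨f, hf, hyf⟩ := stmt4_mem_carrierOf.mp hyc
    obtain ⟨c, d, rfl, hcd⟩ := stmt4_isCycle_edge hC hf
    have hfne : s(u, v) ≠ s(c, d) := by rintro heq; rw [heq] at hnot; exact hnot hf
    have hy2 : y ∈ segment ℝ (toPlane u) (toPlane v) :=
      (convex_segment (toPlane u) (toPlane v)).segment_subset hx hq hy
    rw [stmt4_edgeSeg_mk] at hyf
    obtain ⟨w, hw0, hw1, hyw⟩ := stmt4_seg_param.mp hy
    have hyu : y = toPlane u + (t1 + w * (t2 - t1)) • (toPlane v - toPlane u) := by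
      rw [hyw, hx', hq']; module
    have hend := stmt4_seg_inter_main huv hcd hfne hy2 hyf
    rcases hend with hya | hyb
    · -- parameter is 0
      have hu0 : t1 + w * (t2 - t1) = 0 := by
        apply stmt4_seg_param_inj hABne
        rw [← hyu, hya, zero_smul, add_zero]
      have hsum : (1 - w) * t1 + w * t2 = 0 := by linarith [hu0]; 
      have k1 : (1 - w) * t1 = 0 := by
        nlinarith [mul_nonneg (by linarith : (0:ℝ) ≤ 1 - w) ht10, mul_nonneg hw0 ht20]
      rcases mul_eq_zero.mp k1 with hwz | htz
      · -- w = 1, so y = q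
        have hyq : y = q := by rw [hyw, show w = 1 by linarith, one_smul]; abel
        rw [hyq] at hyc; exact hqnc hyc
      · -- t1 = 0, so y = x
        have hyx : y = x := by
          rw [hyu, hx', show t1 + w * (t2 - t1) = t1 by linear_combination hu0 - htz]
        rw [hyx] at hyc; exact hx1 hyc
    · -- parameter is 1
      have hu1 : t1 + w * (t2 - t1) = 1 := by
        apply stmt4_seg_param_inj hABne
        rw [← hyu, hyb, one_smul]; abel
      have k1 : (1 - w) * (1 - t1) = 0 := by
        nlinarith [mul_nonneg (by linarith : (0:ℝ) ≤ 1 - w) (by linarith : (0:ℝ) ≤ 1 - t1),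
          mul_nonneg hw0 (by linarith : (0:ℝ) ≤ 1 - t2)]
      rcases mul_eq_zero.mp k1 with hwz | htz
      · have hyq : y = q := by rw [hyw, show w = 1 by linarith, one_smul]; abel
        rw [hyq] at hyc; exact hqnc hyc
      · have ht1e : t1 = 1 := by linarith
        have hyx : y = x := by
          rw [hyu, hx', show t1 + w * (t2 - t1) = t1 by linear_combination hu1 - ht1e]
        rw [hyx] at hyc; exact hx1 hyc
  -- x is in the same component as q
  have hxK : x ∈ connectedComponentIn (carrierOf C)ᶜ q :=
    (convex_segment x q).isPreconnected.subset_connectedComponentIn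
      (right_mem_segment ℝ x q) key (left_mem_segment ℝ x q)
  have hcomp : connectedComponentIn (carrierOf C)ᶜ q
      = connectedComponentIn (carrierOf C)ᶜ x := connectedComponentIn_eq hxK
  exact Or.inl ⟨hx1, by rw [← hcomp]; exact hqe.2⟩

end Stmt4Aux

/-- Let `C₁, C₂` be cycles of the grid graph with more than one common
vertex and let `C₃` be the cycle consisting of edges of `C₁` and `C₂` whose interior
contains the interiors of both, every edge of `C₁` or `C₂` lying on `C₃` or in its
interior. If `C₂` has an edge lying in the exterior of `C₁`, then `C₃` contains an edge
of `C₂` lying in the exterior of `C₁`. -/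
theorem merge_cycles_exterior_edge (C₁ C₂ C₃ : Set (Sym2 GridV))
    (h₁ : IsCycle C₁) (h₂ : IsCycle C₂)
    (hcommon : ¬ (vertexSetOf C₁ ∩ vertexSetOf C₂).Subsingleton)
    (h₃ : IsCycle C₃) (h₃sub : C₃ ⊆ C₁ ∪ C₂)
    (h₃int₁ : interiorOf C₁ ⊆ interiorOf C₃) (h₃int₂ : interiorOf C₂ ⊆ interiorOf C₃)
    (h₃cov : ∀ e ∈ C₁ ∪ C₂, e ∈ C₃ ∨ inInterior C₃ (edgeSeg e))
    (hext : ∃ e ∈ C₂, e ∉ C₁ ∧ inExterior C₁ (edgeSeg e)) :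
    ∃ e ∈ C₃, e ∈ C₂ ∧ e ∉ C₁ ∧ inExterior C₁ (edgeSeg e) := by
    classical
  obtain ⟨e, heC2, heC1, hee⟩ := hext
  obtain ⟨a, b, rfl, hab⟩ := stmt4_isCycle_edge h₂ heC2
  by_cases heC3 : s(a, b) ∈ C₃
  · exact ⟨_, heC3, heC2, heC1, hee⟩
  have hcov := (h₃cov s(a, b) (Or.inr heC2)).resolve_left heC3
  -- the midpoint of the edge
  set A := toPlane a with hA
  set B := toPlane b with hB
  have hABne : A ≠ B := fun h => stmt4_gridAdj_ne hab (stmt4_toPlane_inj h)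
  obtain ⟨m, hm⟩ : ∃ m : ℝ × ℝ, m = A + (1/2 : ℝ) • (B - A) := ⟨_, rfl⟩
  have hm_seg : m ∈ edgeSeg s(a, b) := by
    rw [stmt4_edgeSeg_mk]
    exact stmt4_seg_param.mpr ⟨1/2, by norm_num, by norm_num, hm⟩
  have hma : m ≠ A := by
    intro h
    have h' : A + (1/2 : ℝ) • (B - A) = A + (0 : ℝ) • (B - A) := by
      rw [zero_smul, add_zero, ← hm]; exact h
    have := stmt4_seg_param_inj hABne h'
    norm_num at this
  have hmb : m ≠ B := by
    intro h
    have h' : A + (1/2 : ℝ) • (B - A) = A + (1 : ℝ) • (B - A) := by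
      rw [one_smul, ← hm, h]; abel
    have := stmt4_seg_param_inj hABne h'
    norm_num at this
  have hm_nc : ∀ {D : Set (Sym2 GridV)}, IsCycle D → s(a, b) ∉ D → m ∉ carrierOf D := by
    intro D hD hnD hmc
    obtain ⟨f, hf, hmf⟩ := stmt4_mem_carrierOf.mp hmc
    obtain ⟨c, d, rfl, hcd⟩ := stmt4_isCycle_edge hD hf
    have hfne : s(a, b) ≠ s(c, d) := by rintro heq; rw [heq] at hnD; exact hnD hf
    rw [stmt4_edgeSeg_mk] at hmf
    rcases stmt4_seg_inter_main hab hcd hfne (by rw [← stmt4_edgeSeg_mk]; exact hm_seg) hmf with h | h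
    · exact hma h
    · exact hmb h
  have hm_nc1 : m ∉ carrierOf C₁ := hm_nc h₁ heC1
  have hm_nc3 : m ∉ carrierOf C₃ := hm_nc h₃ heC3
  have hm_ext1 : m ∈ exteriorOf C₁ := (hee hm_seg).resolve_right hm_nc1
  have hm_int3 : m ∈ interiorOf C₃ := (hcov hm_seg).resolve_right hm_nc3
  -- claim: some edge of C₃ off C₁ has a point in the exterior of C₁
  have claim : ∃ e', e' ∈ C₃ ∧ e' ∉ C₁ ∧ ∃ q, q ∈ edgeSeg e' ∧ q ∈ exteriorOf C₁ := by
    by_contra hno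
    push_neg at hno
    have hdisj : ∀ q ∈ carrierOf C₃, q ∉ exteriorOf C₁ := by
      intro q hq hqe
      obtain ⟨f, hfC3, hqf⟩ := stmt4_mem_carrierOf.mp hq
      by_cases hf1 : f ∈ C₁
      · exact hqe.1 (stmt4_mem_carrierOf.mpr ⟨f, hf1, hqf⟩)
      · exact hno f hfC3 hf1 q hqf hqe
    set K := connectedComponentIn (carrierOf C₁)ᶜ m with hK
    have hKm : m ∈ K := mem_connectedComponentIn hm_nc1
    have hKsub : K ⊆ (carrierOf C₃)ᶜ := by
      intro q hqK
      have hq1 : q ∉ carrierOf C₁ := connectedComponentIn_subset _ _ hqK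
      have heq : connectedComponentIn (carrierOf C₁)ᶜ m
          = connectedComponentIn (carrierOf C₁)ᶜ q := connectedComponentIn_eq hqK
      have hqe : q ∈ exteriorOf C₁ := ⟨hq1, by rw [← heq]; exact hm_ext1.2⟩
      exact fun hq3 => hdisj q hq3 hqe
    have hKsub3 : K ⊆ connectedComponentIn (carrierOf C₃)ᶜ m :=
      isPreconnected_connectedComponentIn.subset_connectedComponentIn hKm hKsub
    exact hm_ext1.2 (hm_int3.2.subset hKsub3)
  obtain ⟨e', he'3, he'1, q, hqseg, hqext⟩ := claim
  have he'2 : e' ∈ C₂ := (h₃sub he'3).resolve_left he'1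
  refine ⟨e', he'3, he'2, he'1, ?_⟩
  obtain ⟨u, v, rfl, huv⟩ := stmt4_isCycle_edge h₃ he'3
  exact stmt4_edge_exterior h₁ huv he'1 hqseg hqext
end

section
/- Suppose the star-connected occupied component C(0) containing the origin is finite and nonempty, let E_1, …, E_n be the distinct outermost boundary cycles of C(0), and let H_cyc be the graph on {1, …, n} in which i and j are adjacent iff E_i and E_j share a corner. If (i_1, i_2, …, i_m) is a path in H_cyc, then any vertex of E_{i_1} and any vertex of E_{i_m} are joined by a path in G_C consisting only of edges of the cycles E_{i_1}, E_{i_2}, …, E_{i_m}. -/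
lemma walk_append {α : Type*} {R : α → α → Prop} {p q : List α} {u w v : α}
    (hp1 : p.head? = some u) (hp2 : p.getLast? = some w) (hp3 : p.Chain' R)
    (hq1 : q.head? = some w) (hq2 : q.getLast? = some v) (hq3 : q.Chain' R) :
    ∃ r : List α, r.head? = some u ∧ r.getLast? = some v ∧ r.Chain' R := by
  rcases q with _ | ⟨w', t⟩
  · simp at hq1
  · obtain rfl : w' = w := by simpa using hq1
    refine ⟨p ++ t, ?_, ?_, ?_⟩
    · rcases p with _ | ⟨a, p'⟩
      · simp at hp1
      · simpa using hp1
    · rcases t with _ | ⟨x, t'⟩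
      · have : w' = v := by simpa using hq2
        simpa [← this] using hp2
      · have h2 : (x :: t').getLast? = some v := by simpa using hq2
        rw [List.getLast?_append, h2]
        rfl
    · have h' := List.isChain_cons.mp hq3
      refine List.IsChain.append hp3 h'.2 ?_
      intro x hx y hy
      have hxw : w' = x := by rw [hp2] at hx; simpa using hx
      rw [← hxw]
      exact h'.1 y hy

lemma extract_path {α : Type*} (R : α → α → Prop) :
    ∀ (N : ℕ) (p : List α), p.length ≤ N → p ≠ [] → p.Chain' R →
    ∃ q : List α, q.Nodup ∧ q ⊆ p ∧ q.head? = p.head? ∧ q.getLast? = p.getLast? ∧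
      q.Chain' R := by
  intro N
  induction N with
  | zero =>
    intro p hl hne _
    rcases p with _ | ⟨a, p'⟩
    · exact absurd rfl hne
    · simp at hl
  | succ N ih =>
    intro p hl hne hc
    rcases p with _ | ⟨a, p'⟩
    · exact absurd rfl hne
    by_cases ha : a ∈ p'
    · obtain ⟨l₁, l₂, rfl⟩ := List.append_of_mem ha
      have hsuf : (a :: l₂) <:+ (a :: (l₁ ++ a :: l₂)) := ⟨a :: l₁, by simp⟩
      have hc2 : (a :: l₂).Chain' R := hc.suffix hsuf
      have hlen : (a :: l₂).length ≤ N := by simp at hl ⊢; omega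
      obtain ⟨q, h1, h2, h3, h4, h5⟩ := ih (a :: l₂) hlen (by simp) hc2
      refine ⟨q, h1, ?_, ?_, ?_, h5⟩
      · intro x hx
        have := h2 hx
        simp only [List.mem_cons, List.mem_append] at this ⊢
        tauto
      · simpa using h3
      · rw [h4, show a :: (l₁ ++ a :: l₂) = (a :: l₁) ++ a :: l₂ by simp,
          List.getLast?_append_cons]
    · rcases p' with _ | ⟨b, p''⟩
      · exact ⟨[a], by simp, by simp, rfl, rfl, List.isChain_singleton _⟩
      · obtain ⟨hab, hc'⟩ := List.isChain_cons_cons.mp hc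
        obtain ⟨q, h1, h2, h3, h4, h5⟩ := ih (b :: p'') (by simp at hl ⊢; omega)
          (by simp) hc'
        have hqb : q.head? = some b := by simpa using h3
        rcases q with _ | ⟨c, q'⟩
        · simp at hqb
        obtain rfl : c = b := by simpa using hqb
        refine ⟨a :: c :: q', ?_, ?_, rfl, ?_, ?_⟩
        · exact List.nodup_cons.mpr ⟨fun h => ha (h2 h), h1⟩
        · exact List.cons_subset_cons a h2
        · rw [List.getLast?_cons_cons, h4, List.getLast?_cons_cons]
        · exact List.isChain_cons_cons.mpr ⟨hab, h5⟩

lemma cycle_walk (C : GridCycle) (i : ZMod C.n) :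
    ∀ k : ℕ, ∃ p : List GridV, p.head? = some (C.f i) ∧
      p.getLast? = some (C.f (i + (k : ZMod C.n))) ∧
      p.Chain' (fun a b => s(a, b) ∈ C.edgeSet) := by
  intro k
  induction k with
  | zero => exact ⟨[C.f i], rfl, by simp, List.isChain_singleton _⟩
  | succ k ih =>
    obtain ⟨p, h1, h2, h3⟩ := ih
    refine ⟨p ++ [C.f (i + ((k + 1 : ℕ) : ZMod C.n))], ?_, ?_, ?_⟩
    · rcases p with _ | ⟨a, p'⟩
      · simp at h1
      · simpa using h1
    · simp
    · refine List.IsChain.append h3 (List.isChain_singleton _) ?_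
      intro x hx y hy
      have hx' : x = C.f (i + (k : ZMod C.n)) := by
        rw [h2] at hx; symm; simpa using hx
      have hy' : y = C.f (i + ((k + 1 : ℕ) : ZMod C.n)) := by
        symm; simpa using hy
      subst hx'; subst hy'
      refine ⟨i + (k : ZMod C.n), ?_⟩
      congr 2
      push_cast
      ring

lemma vertex_exists {C : GridCycle} {u : GridV} (hu : u ∈ vertexSetOf C.edgeSet) :
    ∃ i, C.f i = u := by
  obtain ⟨e, ⟨j, rfl⟩, hue⟩ := hu
  rcases Sym2.mem_iff.mp hue with h | h
  · exact ⟨j, h.symm⟩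
  · exact ⟨j + 1, h.symm⟩

lemma cycle_connected {Ec : Set (Sym2 GridV)} (h : IsCycle Ec) {u v : GridV}
    (hu : u ∈ vertexSetOf Ec) (hv : v ∈ vertexSetOf Ec) :
    ∃ p : List GridV, p.head? = some u ∧ p.getLast? = some v ∧
      p.Chain' (fun a b => s(a, b) ∈ Ec) := by
  obtain ⟨C, rfl⟩ := h
  obtain ⟨i, rfl⟩ := vertex_exists hu
  obtain ⟨j, rfl⟩ := vertex_exists hv
  haveI : NeZero C.n := ⟨by have := C.hn; omega⟩
  obtain ⟨p, h1, h2, h3⟩ := cycle_walk C i ((j - i).val)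
  refine ⟨p, h1, ?_, h3⟩
  rw [h2]
  congr 2
  rw [ZMod.natCast_val, ZMod.cast_id]
  ring

lemma main_aux (n : ℕ) (E : Fin n → Set (Sym2 GridV))
    (hcyc : ∀ i, IsCycle (E i)) :
    ∀ l : List (Fin n), l.Chain' (fun i j =>
      (SimpleGraph.fromRel fun a b =>
        (vertexSetOf (E a) ∩ vertexSetOf (E b)).Nonempty).Adj i j) →
    ∀ i₁ iₘ : Fin n, l.head? = some i₁ → l.getLast? = some iₘ →
    ∀ u v : GridV, u ∈ vertexSetOf (E i₁) → v ∈ vertexSetOf (E iₘ) →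
    ∃ p : List GridV, p.head? = some u ∧ p.getLast? = some v ∧
      p.Chain' (fun a b => ∃ i ∈ l, s(a, b) ∈ E i) := by
  intro l
  induction l with
  | nil => intro _ i₁ iₘ h; simp at h
  | cons i rest ih =>
    intro hch i₁ iₘ hh hl u v hu hv
    obtain rfl : i = i₁ := by simpa using hh
    rcases rest with _ | ⟨j, rest'⟩
    · obtain rfl : i = iₘ := by simpa using hl
      obtain ⟨p, h1, h2, h3⟩ := cycle_connected (hcyc i) hu hv
      exact ⟨p, h1, h2, List.IsChain.imp (fun a b hab => ⟨i, by simp, hab⟩) h3⟩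
    · obtain ⟨hij, hch'⟩ := List.isChain_cons_cons.mp hch
      rw [SimpleGraph.fromRel_adj] at hij
      have hw : (vertexSetOf (E i) ∩ vertexSetOf (E j)).Nonempty := by
        rcases hij.2 with h | h
        · exact h
        · obtain ⟨w, hw1, hw2⟩ := h
          exact ⟨w, hw2, hw1⟩
      obtain ⟨w, hw1, hw2⟩ := hw
      obtain ⟨p₁, a1, a2, a3⟩ := cycle_connected (hcyc i) hu hw1
      have hlast' : (j :: rest').getLast? = some iₘ := by
        rw [← List.getLast?_cons_cons (a := i)]; exact hl
      obtain ⟨p₂, b1, b2, b3⟩ := ih hch' j iₘ rfl hlast' w v hw2 hv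
      exact walk_append (R := fun a b => ∃ k ∈ i :: j :: rest', s(a, b) ∈ E k)
        a1 a2 (List.IsChain.imp (fun a b hab => ⟨i, by simp, hab⟩) a3)
        b1 b2 (List.IsChain.imp (fun a b ⟨k, hk, hke⟩ => ⟨k, by simp [hk], hke⟩) b3)

/-- Suppose `C(0)` is finite and nonempty, `E₁, …, Eₙ` enumerate the
distinct outermost boundary cycles of `C(0)`, and `H_cyc` is the graph on `{1, …, n}` in
which `i, j` are adjacent iff `E i` and `E j` share a corner. If `(i₁, …, i_m)` is a
path in `H_cyc`, then any vertex of `E i₁` and any vertex of `E i_m` are joined by a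
path of `G_C` using only edges of the cycles `E i₁, …, E i_m`. -/
theorem path_along_cycle_graph (ω : GridV → Prop)
    (hfin : (starComp ω).Finite) (hne : (starComp ω).Nonempty)
    (n : ℕ) (E : Fin n → Set (Sym2 GridV)) (hinj : Function.Injective E)
    (hall : ∀ i, ∃ z ∈ starComp ω, isOutermostCycleOf ω z (E i))
    (hcover : ∀ z ∈ starComp ω, ∀ D, isOutermostCycleOf ω z D → ∃ i, E i = D)
    (l : List (Fin n)) (hlnd : l.Nodup)
    (hlchain : List.Chain' (fun i j =>
      (SimpleGraph.fromRel fun a b =>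
        (vertexSetOf (E a) ∩ vertexSetOf (E b)).Nonempty).Adj i j) l)
    (i₁ iₘ : Fin n) (hhead : l.head? = some i₁) (hlast : l.getLast? = some iₘ)
    (u v : GridV) (hu : u ∈ vertexSetOf (E i₁)) (hv : v ∈ vertexSetOf (E iₘ)) :
    ∃ p : List GridV, p.Nodup ∧ p.head? = some u ∧ p.getLast? = some v ∧
      List.Chain' (fun a b => ∃ i ∈ l, s(a, b) ∈ E i) p := by
  have hcyc : ∀ i, IsCycle (E i) := fun i => by
    obtain ⟨z, _, h⟩ := hall i
    exact h.1.1
  obtain ⟨p, h1, h2, h3⟩ := main_aux n E hcyc l hlchain i₁ iₘ hhead hlast u v hu hv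
  have hne' : p ≠ [] := by rintro rfl; simp at h1
  obtain ⟨q, q1, _, q3, q4, q5⟩ :=
    extract_path (fun a b => ∃ i ∈ l, s(a, b) ∈ E i) p.length p le_rfl hne' h3
  exact ⟨q, q1, q3.trans h1, q4.trans h2, q5⟩
end
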